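/- Let (θ_i, θ*_i, i=0..d; φ_j, φ'_j, j=1..d) be a parameter array over a field K with d ≥ 1. Then φ_i = φ'_d ∑_{h=0}^{i-1}(θ_h-θ_{d-h})/(θ_0-θ_d) + (θ_i-θ_0)(θ*_{i-1}-θ*_d) for 1 ≤ i ≤ d. -/
import Mathlib

open Finset

namespace PAaux

variable {K : Type*} [Field K]

/-- downward difference -/
def dlt (a : ℕ → K) (k : ℕ) : K := a k - a (k+1)

/-- cross Casoratian of differences -/
def mm (a b : ℕ → K) (k l : ℕ) : K := dlt a k * dlt b l - dlt a l * dlt b k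

/-- universal gap sequence -/
def rho (a b : ℕ → K) (β : K) : ℕ → K
  | 0 => 0
  | 1 => mm a b 1 0
  | (n+2) => (β - 1) * rho a b β (n+1) - rho a b β n

/-- partial sums of rho -/
def Pp (a b : ℕ → K) (β : K) (n : ℕ) : K := ∑ j ∈ range n, rho a b β j

def uu (a : ℕ → K) (d k : ℕ) : K := a k - a (d - k)

def Sg (a b : ℕ → K) (β : K) (d k : ℕ) : K := Pp a b β k - Pp a b β (d - k)

def DD (a b : ℕ → K) (d i : ℕ) : K :=
  (b (i+1) - b 0) * (a i - a d) - (a (i+1) - a 0) * (b i - b d)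

def TT (a : ℕ → K) (d i : ℕ) : K := ∑ h ∈ range i, uu a d h

variable (a b : ℕ → K) (β : K) (d : ℕ)
variable (ha : ∀ k, k + 3 ≤ d → a (k+3) = β * a (k+2) - β * a (k+1) + a k)
variable (hb : ∀ k, k + 3 ≤ d → b (k+3) = β * b (k+2) - β * b (k+1) + b k)

section basic

include ha in
lemma dlt_rec (k : ℕ) (hk : k + 3 ≤ d) :
    dlt a (k+2) = (β - 1) * dlt a (k+1) - dlt a k := by
  have h := ha k hk
  simp only [dlt]
  linear_combination -h

lemma rho_two (n : ℕ) :
    rho a b β (n+2) = (β - 1) * rho a b β (n+1) - rho a b β n := rfl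

include ha hb in
lemma mm_adj : ∀ k, k + 2 ≤ d → mm a b (k+1) k = mm a b 1 0 := by
  intro k
  induction k with
  | zero => intro _; rfl
  | succ k ih =>
    intro hk
    have hk' : k + 2 ≤ d := by omega
    have h3 : k + 3 ≤ d := by omega
    have hda := dlt_rec a β d ha k h3
    have hdb := dlt_rec b β d hb k h3
    rw [← ih hk']
    simp only [mm]
    rw [show k + 1 + 1 = k + 2 from rfl, hda, hdb]
    ring

include ha hb in
lemma mm_eq_rho : ∀ j k, k + j + 1 ≤ d → mm a b (k+j) k = rho a b β j := by
  intro j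
  induction j using Nat.twoStepInduction with
  | zero => intro k _; simp [mm, rho]
  | one => intro k hk; exact mm_adj a b β d ha hb k (by omega)
  | more j ih1 ih2 =>
    intro k hk
    have h3 : (k + j) + 3 ≤ d := by omega
    have hda := dlt_rec a β d ha (k+j) h3
    have hdb := dlt_rec b β d hb (k+j) h3
    have e1 := ih1 k (by omega)
    have e2 := ih2 k (by omega)
    rw [rho_two]
    simp only [mm] at e1 e2 ⊢
    rw [show k + (j+2) = (k + j) + 2 from by ring, hda, hdb,
        show k + (j+1) = (k + j) + 1 from by ring] at *
    linear_combination (β - 1) * e2 - e1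

/-- telescoping -/
lemma tele (m n : ℕ) : a m - a (m + n) = ∑ t ∈ range n, dlt a (m + t) := by
  induction n with
  | zero => simp
  | succ n ih =>
    rw [sum_range_succ, ← ih, dlt, show m + (n + 1) = m + n + 1 from by ring]
    ring

end basic


section KI1

include ha hb in
lemma DD_zero (hd : 1 ≤ d) : DD a b d 0 = Sg a b β d 0 := by
  have hta := tele a 0 d
  have htb := tele b 0 d
  simp only [Nat.zero_add] at hta htb
  have : DD a b d 0 = ∑ t ∈ range d, ((b 1 - b 0) * dlt a t - (a 1 - a 0) * dlt b t) := by
    rw [sum_sub_distrib, ← mul_sum, ← mul_sum, ← hta, ← htb, DD]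
  rw [this, Sg, Pp, Pp]
  simp only [Nat.sub_zero, sum_range_zero, zero_sub, ← sum_neg_distrib]
  apply sum_congr rfl
  intro t ht
  simp only [mem_range] at ht
  have hm : mm a b (0 + t) 0 = rho a b β t := mm_eq_rho a b β d ha hb t 0 (by omega)
  simp only [Nat.zero_add, mm, dlt] at hm
  simp only [dlt]
  linear_combination -hm

include ha hb in
lemma DD_step (i : ℕ) (hi : i + 2 ≤ d) :
    DD a b d (i+1) - DD a b d i = Sg a b β d (i+1) := by
  -- A term
  have hA : dlt a (i+1) * (b (i+1) - b d) - (a (i+1) - a d) * dlt b (i+1)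
      = - Pp a b β (d - (i+1)) := by
    have hta := tele a (i+1) (d - (i+1))
    have htb := tele b (i+1) (d - (i+1))
    rw [show i + 1 + (d - (i+1)) = d from by omega] at hta htb
    have h1 : dlt a (i+1) * (b (i+1) - b d) - (a (i+1) - a d) * dlt b (i+1)
        = ∑ t ∈ range (d - (i+1)), (dlt a (i+1) * dlt b (i+1+t) - dlt a (i+1+t) * dlt b (i+1)) := by
      rw [hta, htb, mul_sum, sum_mul, ← sum_sub_distrib]
    rw [h1, Pp, ← sum_neg_distrib]
    apply sum_congr rfl
    intro t ht
    simp only [mem_range] at ht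
    have hm : mm a b ((i+1) + t) (i+1) = rho a b β t :=
      mm_eq_rho a b β d ha hb t (i+1) (by omega)
    simp only [mm] at hm
    linear_combination -hm
  -- B term
  have hB : (a (i+1) - a 0) * dlt b i - dlt a i * (b (i+1) - b 0)
      = Pp a b β (i+1) := by
    have hta := tele a 0 (i+1)
    have htb := tele b 0 (i+1)
    simp only [Nat.zero_add] at hta htb
    have h1 : (a (i+1) - a 0) * dlt b i - dlt a i * (b (i+1) - b 0)
        = ∑ t ∈ range (i+1), (dlt a i * dlt b t - dlt a t * dlt b i) := by
      rw [sum_sub_distrib, ← mul_sum, ← sum_mul]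
      rw [show (∑ t ∈ range (i+1), dlt a t) = a 0 - a (i+1) from hta.symm,
          show (∑ t ∈ range (i+1), dlt b t) = b 0 - b (i+1) from htb.symm]
      ring
    rw [h1]
    have h2 : ∀ t ∈ range (i+1), dlt a i * dlt b t - dlt a t * dlt b i
        = rho a b β (i - t) := by
      intro t ht
      simp only [mem_range] at ht
      have hm : mm a b (t + (i - t)) t = rho a b β (i - t) :=
        mm_eq_rho a b β d ha hb (i - t) t (by omega)
      rw [show t + (i - t) = i from by omega] at hm
      simp only [mm] at hm
      linear_combination hm
    rw [sum_congr rfl h2, Pp]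
    rw [← Finset.sum_range_reflect (fun j => rho a b β j) (i+1)]
    simp
  have hC : DD a b d (i+1) - DD a b d i
      = (dlt a (i+1) * (b (i+1) - b d) - (a (i+1) - a d) * dlt b (i+1))
        + ((a (i+1) - a 0) * dlt b i - dlt a i * (b (i+1) - b 0)) := by
    simp only [DD, dlt]
    ring
  rw [hC, hA, hB, Sg]
  ring

end KI1


section prop

include ha in
lemma u_rec (k : ℕ) (hk : k + 3 ≤ d) :
    uu a d (k+3) = β * uu a d (k+2) - β * uu a d (k+1) + uu a d k := by
  have e0 : d - k = (d - (k+3)) + 3 := by omega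
  have e1 : d - (k+1) = (d - (k+3)) + 2 := by omega
  have e2 : d - (k+2) = (d - (k+3)) + 1 := by omega
  have h1 := ha k hk
  have h2 := ha (d - (k+3)) (by omega)
  simp only [uu, e0, e1, e2]
  linear_combination h1 + h2

lemma Pp_rec (n : ℕ) :
    Pp a b β (n+3) = β * Pp a b β (n+2) - β * Pp a b β (n+1) + Pp a b β n := by
  simp only [Pp, sum_range_succ]
  rw [rho_two]
  ring

lemma Sg_rec (k : ℕ) (hk : k + 3 ≤ d) :
    Sg a b β d (k+3) = β * Sg a b β d (k+2) - β * Sg a b β d (k+1) + Sg a b β d k := by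
  have e0 : d - k = (d - (k+3)) + 3 := by omega
  have e1 : d - (k+1) = (d - (k+3)) + 2 := by omega
  have e2 : d - (k+2) = (d - (k+3)) + 1 := by omega
  have h1 := Pp_rec a b β k
  have h2 := Pp_rec a b β (d - (k+3))
  simp only [Sg, e0, e1, e2]
  linear_combination h1 + h2

/-- the propagating predicate -/
def Q (j : ℕ) : Prop :=
  Sg a b β d j * uu a d (j+1) - Sg a b β d (j+1) * uu a d j = 0 ∧
  Sg a b β d (j+1) * uu a d (j+2) - Sg a b β d (j+2) * uu a d (j+1) = 0 ∧
  Sg a b β d j * uu a d (j+2) - Sg a b β d (j+2) * uu a d j = 0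

include ha in
lemma Q_down (j : ℕ) (hj : j + 3 ≤ d) (hQ : Q a b β d (j+1)) : Q a b β d j := by
  obtain ⟨q1, q2, q3⟩ := hQ
  have hu := u_rec a β d ha j hj
  have hs := Sg_rec a b β d j hj
  refine ⟨?_, q1, ?_⟩
  · linear_combination (- uu a d (j+1)) * hs + Sg a b β d (j+1) * hu + β * q1 - q3
  · linear_combination (- uu a d (j+2)) * hs + Sg a b β d (j+2) * hu + β * q1 - q2

include ha in
lemma Q_desc : ∀ n j, (j + n) + 3 ≤ d + 1 → Q a b β d (j + n) → Q a b β d j := by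
  intro n
  induction n with
  | zero => intro j _ hQ; simpa using hQ
  | succ n ih =>
    intro j hj hQ
    refine ih j (by omega) ?_
    have := Q_down a b β d ha (j + n) (by omega)
    rw [show j + (n+1) = (j + n) + 1 from by ring] at hQ
    exact this hQ

lemma Q_mid_even (t : ℕ) (hd2 : d = 2*t + 2) : Q a b β d t := by
  have e1 : d - (t+1) = t+1 := by omega
  have e2 : d - (t+2) = t := by omega
  have e3 : d - t = t+2 := by omega
  refine ⟨?_, ?_, ?_⟩
  · simp only [uu, Sg, e1, e2, e3]; ring
  · simp only [uu, Sg, e1, e2, e3]; ring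
  · simp only [uu, Sg, e1, e2, e3]; ring

include ha in
lemma Q_mid_odd (t : ℕ) (hd2 : d = 2*t + 3) : Q a b β d t := by
  have e1 : d - (t+1) = t+2 := by omega
  have e2 : d - (t+2) = t+1 := by omega
  have e3 : d - t = t+3 := by omega
  have hrec := ha t (by omega)
  have hP2 : Pp a b β (t+2) = Pp a b β (t+1) + rho a b β (t+1) := by
    simp [Pp, sum_range_succ]
  have hP3 : Pp a b β (t+3) = Pp a b β (t+1) + rho a b β (t+1) + rho a b β (t+2) := by
    simp [Pp, sum_range_succ]
  have hPt : Pp a b β (t+1) = Pp a b β t + rho a b β t := by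
    simp [Pp, sum_range_succ]
  have hr2 := rho_two a b β t
  refine ⟨?_, ?_, ?_⟩
  · simp only [uu, Sg, e1, e2, e3, hP2, hP3, hPt]
    linear_combination (-(rho a b β (t+1))) * hrec - (a (t+1) - a (t+2)) * hr2
  · simp only [uu, Sg, e1, e2, e3, hP2, hP3, hPt]
    ring
  · simp only [uu, Sg, e1, e2, e3, hP2, hP3, hPt]
    linear_combination rho a b β (t+1) * hrec + (a (t+1) - a (t+2)) * hr2

end prop


section final

include ha in
lemma Q_zero (hd2 : 2 ≤ d) : Q a b β d 0 := by
  rcases Nat.even_or_odd d with ⟨k, hk⟩ | ⟨k, hk⟩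
  · have hk1 : 1 ≤ k := by omega
    obtain ⟨t, rfl⟩ : ∃ t, k = t + 1 := ⟨k - 1, by omega⟩
    have hQt := Q_mid_even a b β d (t := t) (by omega)
    exact Q_desc a b β d ha t 0 (by omega) (by simpa using hQt)
  · have hk1 : 1 ≤ k := by omega
    obtain ⟨t, rfl⟩ : ∃ t, k = t + 1 := ⟨k - 1, by omega⟩
    have hQt := Q_mid_odd a b β d ha (t := t) (by omega)
    exact Q_desc a b β d ha t 0 (by omega) (by simpa using hQt)

include ha in
lemma Hprop : ∀ j, j ≤ d → Sg a b β d j * uu a d 0 = Sg a b β d 0 * uu a d j := by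
  intro j
  induction j using Nat.strong_induction_on with
  | _ j ih =>
    match j with
    | 0 => intro _; ring
    | 1 =>
      intro hj
      rcases Nat.lt_or_ge d 2 with hd2 | hd2
      · have hd1 : d = 1 := by omega
        have hp1 : Pp a b β 1 = 0 := by simp [Pp, rho]
        have hp0 : Pp a b β 0 = 0 := by simp [Pp]
        subst hd1
        simp only [Sg, show (1:ℕ) - 1 = 0 from rfl, Nat.sub_zero, hp1, hp0]
        ring
      · have q := (Q_zero a b β d ha hd2).1
        simp only [Nat.zero_add] at q
        linear_combination -q
    | 2 =>
      intro hj
      have q := (Q_zero a b β d ha (by omega)).2.2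
      simp only [Nat.zero_add] at q
      linear_combination -q
    | (j+3) =>
      intro hj
      have hu := u_rec a β d ha j (by omega)
      have hs := Sg_rec a b β d j (by omega)
      have ih0 := ih j (by omega) (by omega)
      have ih1 := ih (j+1) (by omega) (by omega)
      have ih2 := ih (j+2) (by omega) (by omega)
      linear_combination uu a d 0 * hs - Sg a b β d 0 * hu + β * ih2 - β * ih1 + ih0

include ha hb in
lemma core : ∀ i, i + 1 ≤ d → DD a b d i * uu a d 0 = DD a b d 0 * TT a d (i+1) := by
  intro i
  induction i with
  | zero =>
    intro _
    simp [TT, uu, sum_range_one]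
  | succ i ih =>
    intro hi
    have hK := DD_step a b β d ha hb i (by omega)
    have hH := Hprop a b β d ha (i+1) (by omega)
    have hB0 := DD_zero a b β d ha hb (by omega)
    have hih := ih (by omega)
    have hTT : TT a d (i+2) = TT a d (i+1) + uu a d (i+1) := by
      simp [TT, sum_range_succ]
    rw [hTT]
    linear_combination hih + uu a d 0 * hK + hH - uu a d (i+1) * hB0

lemma TT_d (hd : 1 ≤ d) : TT a d d = uu a d 0 := by
  have hr : ∑ h ∈ range d, a (d - h) = ∑ h ∈ range d, a (h+1) := by
    rw [← Finset.sum_range_reflect (fun h => a (d - h)) d]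
    apply sum_congr rfl
    intro h hh
    simp only [mem_range] at hh
    congr 1
    omega
  simp only [TT, uu, Nat.sub_zero]
  rw [sum_sub_distrib, hr, ← sum_sub_distrib, Finset.sum_range_sub' a d]

end final

end PAaux


open PAaux in
theorem parameter_array_varphi_alt' {K : Type*} [Field K] (d : ℕ) (hd : 1 ≤ d)
    (θ θs φ φp : ℕ → K)
    (h1 : ∀ i, 1 ≤ i → i ≤ d → φ i ≠ 0 ∧ φp i ≠ 0)
    (h2 : ∀ i j, i ≤ d → j ≤ d → i ≠ j → θ i ≠ θ j ∧ θs i ≠ θs j)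
    (h3 : ∀ i, 1 ≤ i → i ≤ d →
      φ i = φp 1 * (∑ h ∈ Finset.range i, (θ h - θ (d - h)) / (θ 0 - θ d))
        + (θs i - θs 0) * (θ (i - 1) - θ d))
    (h4 : ∀ i, 1 ≤ i → i ≤ d →
      φp i = φ 1 * (∑ h ∈ Finset.range i, (θ h - θ (d - h)) / (θ 0 - θ d))
        + (θs i - θs 0) * (θ (d - i + 1) - θ 0))
    (β : K)
    (h5 : ∀ i, 2 ≤ i → i + 1 ≤ d →
      (θ (i - 2) - θ (i + 1)) / (θ (i - 1) - θ i) = β ∧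
      (θs (i - 2) - θs (i + 1)) / (θs (i - 1) - θs i) = β) :
    ∀ i, 1 ≤ i → i ≤ d →
      φ i = φp d * (∑ h ∈ Finset.range i, (θ h - θ (d - h)) / (θ 0 - θ d))
        + (θ i - θ 0) * (θs (i - 1) - θs d) := by
  have ha : ∀ k, k + 3 ≤ d → θ (k+3) = β * θ (k+2) - β * θ (k+1) + θ k := by
    intro k hk
    have h := (h5 (k+2) (by omega) (by omega)).1
    have hne : θ (k+1) - θ (k+2) ≠ 0 :=
      sub_ne_zero.mpr ((h2 (k+1) (k+2) (by omega) (by omega) (by omega)).1)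
    simp only [show k+2-2 = k from by omega, show k+2-1 = k+1 from by omega,
      show k+2+1 = k+3 from by omega] at h
    rw [div_eq_iff hne] at h
    linear_combination -h
  have hb : ∀ k, k + 3 ≤ d → θs (k+3) = β * θs (k+2) - β * θs (k+1) + θs k := by
    intro k hk
    have h := (h5 (k+2) (by omega) (by omega)).2
    have hne : θs (k+1) - θs (k+2) ≠ 0 :=
      sub_ne_zero.mpr ((h2 (k+1) (k+2) (by omega) (by omega) (by omega)).2)
    simp only [show k+2-2 = k from by omega, show k+2-1 = k+1 from by omega,
      show k+2+1 = k+3 from by omega] at h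
    rw [div_eq_iff hne] at h
    linear_combination -h
  have hne : θ 0 - θ d ≠ 0 := sub_ne_zero.mpr ((h2 0 d (by omega) le_rfl (by omega)).1)
  have hsum : ∀ i : ℕ, (∑ h ∈ Finset.range i, (θ h - θ (d - h)) / (θ 0 - θ d))
      = TT θ d i / (θ 0 - θ d) := by
    intro i
    rw [← Finset.sum_div]
    simp [TT, uu]
  have hTd : TT θ d d = θ 0 - θ d := by
    have := TT_d θ d hd
    rw [this]
    simp [uu]
  have E2 : φp d = φ 1 + (θs d - θs 0) * (θ 1 - θ 0) := by
    have h := h4 d hd le_rfl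
    rw [hsum d, hTd, div_self hne] at h
    simpa [show d - d + 1 = 1 from by omega] using h
  have E3 : φ 1 = φp 1 + (θs 1 - θs 0) * (θ 0 - θ d) := by
    have h := h3 1 le_rfl hd
    rw [hsum 1] at h
    have hTT1 : TT θ d 1 = θ 0 - θ d := by simp [TT, uu]
    rw [hTT1, div_self hne] at h
    simpa using h
  intro i hi1 hid
  obtain ⟨i', rfl⟩ : ∃ i', i = i' + 1 := ⟨i - 1, by omega⟩
  have E1 := h3 (i'+1) (by omega) hid
  rw [hsum] at E1
  simp only [Nat.add_sub_cancel] at E1 ⊢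
  have hcore := core θ θs β d ha hb i' hid
  simp only [DD, uu, Nat.sub_zero] at hcore
  rw [hsum]
  have hdv : TT θ d (i'+1) / (θ 0 - θ d) * (θ 0 - θ d) = TT θ d (i'+1) :=
    div_mul_cancel₀ _ hne
  apply mul_right_cancel₀ hne
  linear_combination (θ 0 - θ d) * E1 + (φp 1 - φp d) * hdv
    - TT θ d (i'+1) * E2 - TT θ d (i'+1) * E3 + hcore

/-- A parameter array of diameter `d` over `K`:
scalars `θ 0,…,θ d`, `θs 0,…,θs d`, `φ 1,…,φ d`, `φp 1,…,φp d`
satisfying conditions (i)–(v) of the classification theorem. -/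
def IsParameterArray (K : Type*) [Field K] (d : ℕ) (θ θs φ φp : ℕ → K) : Prop :=
  (∀ i, 1 ≤ i → i ≤ d → φ i ≠ 0 ∧ φp i ≠ 0) ∧
  (∀ i j, i ≤ d → j ≤ d → i ≠ j → θ i ≠ θ j ∧ θs i ≠ θs j) ∧
  (∀ i, 1 ≤ i → i ≤ d →
    φ i = φp 1 * (∑ h ∈ Finset.range i, (θ h - θ (d - h)) / (θ 0 - θ d))
      + (θs i - θs 0) * (θ (i - 1) - θ d)) ∧
  (∀ i, 1 ≤ i → i ≤ d →
    φp i = φ 1 * (∑ h ∈ Finset.range i, (θ h - θ (d - h)) / (θ 0 - θ d))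
      + (θs i - θs 0) * (θ (d - i + 1) - θ 0)) ∧
  (∃ β : K, ∀ i, 2 ≤ i → i + 1 ≤ d →
    (θ (i - 2) - θ (i + 1)) / (θ (i - 1) - θ i) = β ∧
    (θs (i - 2) - θs (i + 1)) / (θs (i - 1) - θs i) = β)

theorem parameter_array_varphi_alt {K : Type*} [Field K] (d : ℕ) (hd : 1 ≤ d)
    (θ θs φ φp : ℕ → K) (h : IsParameterArray K d θ θs φ φp) :
    ∀ i, 1 ≤ i → i ≤ d →
      φ i = φp d * (∑ h ∈ Finset.range i, (θ h - θ (d - h)) / (θ 0 - θ d))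
        + (θ i - θ 0) * (θs (i - 1) - θs d) := by
  obtain ⟨h1, h2, h3, h4, β, h5⟩ := h
  exact parameter_array_varphi_alt' d hd θ θs φ φp h1 h2 h3 h4 β h5
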